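/- Let T be a finite semigroup and let H be an H-class of T. Then either H is a singleton, or there exist an element r ∈ T and a subsemigroup G of T that is a group such that H = r·G = {r·g | g ∈ G}. -/
import Mathlib


open Pointwise

namespace FOSep

/-- First-order formulas over alphabet `A`, with variables indexed by `ℕ`:
atomic formulas are `a(x)` for letters `a` and `x < y`; connectives are
negation, conjunction and existential quantification. -/
inductive Form (A : Type) : Type
  | letter : A → ℕ → Form A
  | lt : ℕ → ℕ → Form A
  | not : Form A → Form A
  | and : Form A → Form A → Form A
  | ex : ℕ → Form A → Form A

namespace Form

/-- Quantifier rank: maximal nesting depth of quantifiers. -/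
def rank {A : Type} : Form A → ℕ
  | letter _ _ => 0
  | lt _ _ => 0
  | not φ => rank φ
  | and φ ψ => max (rank φ) (rank ψ)
  | ex _ φ => rank φ + 1

/-- Free variables of a formula. -/
def freeVars {A : Type} : Form A → Finset ℕ
  | letter _ i => {i}
  | lt i j => {i, j}
  | not φ => freeVars φ
  | and φ ψ => freeVars φ ∪ freeVars ψ
  | ex n φ => freeVars φ \ {n}

end Form

/-- A sentence is a formula without free variables. -/
def IsSentence {A : Type} (φ : Form A) : Prop := φ.freeVars = ∅

/-- Satisfaction of a formula in a finite word (a list of letters, whose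
positions are ordered by `<`), under an assignment of variables to positions. -/
def Interp {A : Type} (w : List A) : Form A → (ℕ → Fin w.length) → Prop
  | .letter a i, v => w.get (v i) = a
  | .lt i j, v => (v i : ℕ) < (v j : ℕ)
  | .not φ, v => ¬ Interp w φ v
  | .and φ ψ, v => Interp w φ v ∧ Interp w ψ v
  | .ex n φ, v => ∃ p : Fin w.length, Interp w φ (Function.update v n p)

/-- The underlying (nonempty) list of letters of a nonempty word. -/
def wordList {A : Type} (w : FreeSemigroup A) : List A := w.head :: w.tail

/-- A nonempty word satisfies a formula if every assignment satisfies it;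
for sentences this is the usual notion of satisfaction. -/
def Models {A : Type} (w : FreeSemigroup A) (φ : Form A) : Prop :=
  ∀ v : ℕ → Fin (wordList w).length, Interp (wordList w) φ v

/-- The language of words of `A⁺` satisfying `φ`. -/
def LangOf {A : Type} (φ : Form A) : Set (FreeSemigroup A) := { w | Models w φ }

/-- A language `L ⊆ A⁺` is FO-definable if it is the language of some sentence. -/
def FODefinable {A : Type} (L : Set (FreeSemigroup A)) : Prop :=
  ∃ φ : Form A, IsSentence φ ∧ L = LangOf φ

/-- `w ≡_k w'`: the two words satisfy the same sentences of quantifier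
rank at most `k`. -/
def EquivK {A : Type} (k : ℕ) (w w' : FreeSemigroup A) : Prop :=
  ∀ φ : Form A, IsSentence φ → φ.rank ≤ k → (Models w φ ↔ Models w' φ)

/-- A finite partition of `X`: finitely many blocks, and every element lies
in exactly one block. -/
def FinPart {X : Type} (P : Set (Set X)) : Prop :=
  P.Finite ∧ ∀ x : X, ∃! B, B ∈ P ∧ x ∈ B

/-- An FO-partition: a finite partition all of whose blocks are FO-definable. -/
def FOPart {A : Type} (P : Set (Set (FreeSemigroup A))) : Prop :=
  FinPart P ∧ ∀ B ∈ P, FODefinable B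

/-- `K` separates `L₀` from `L₁`. -/
def Separates {X : Type} (K L₀ L₁ : Set X) : Prop :=
  L₀ ⊆ K ∧ K ∩ L₁ = ∅

/-- `L₀` and `L₁` are separable by an FO-definable language. -/
def FOSeparable {A : Type} (L₀ L₁ : Set (FreeSemigroup A)) : Prop :=
  ∃ K : Set (FreeSemigroup A), FODefinable K ∧ Separates K L₀ L₁

/-- The imprint of a finite partition `P` on a morphism `α`:
the sets `T ⊆ S` contained in the image of some block. -/
def imprint {A S : Type} [Semigroup S] (α : FreeSemigroup A →ₙ* S)
    (P : Set (Set (FreeSemigroup A))) : Set (Set S) :=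
  { T | ∃ K ∈ P, T ⊆ ⇑α '' K }

/-- The optimal FO-imprint of `α`: the intersection of the imprints of all
FO-partitions. -/
def optImprintFO {A S : Type} [Semigroup S] (α : FreeSemigroup A →ₙ* S) :
    Set (Set S) :=
  { T | ∀ P : Set (Set (FreeSemigroup A)), FOPart P → T ∈ imprint α P }

/-- Powers in a semigroup: `spow x n = x^(n+1)`. -/
def spow {M : Type} [Semigroup M] (x : M) : ℕ → M
  | 0 => x
  | n + 1 => spow x n * x

/-- `X ⊆ 2^S` contains `𝕊` and is closed under downset, products, and the
FO-operation `T ↦ T^ω ∪ T^(ω+1)` (phrased via idempotent powers: in a finite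
semigroup, `T^ω` is the unique idempotent power of `T`). -/
def SatClosed {S : Type} [Semigroup S] (𝕊 X : Set (Set S)) : Prop :=
  𝕊 ⊆ X ∧
  (∀ T ∈ X, ∀ T' : Set S, T' ⊆ T → T' ∈ X) ∧
  (∀ T ∈ X, ∀ T' ∈ X, T * T' ∈ X) ∧
  (∀ T ∈ X, ∀ n : ℕ, spow T n * spow T n = spow T n →
      spow T n ∪ spow T n * T ∈ X)

/-- `Sat 𝕊`: the smallest subset of `2^S` containing `𝕊` that is closed under
downset, products and the FO-operation. -/
def Sat {S : Type} [Semigroup S] (𝕊 : Set (Set S)) : Set (Set S) :=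
  ⋂₀ { X | SatClosed 𝕊 X }

/-- `Sat α = Sat({{α(w)} | w ∈ A⁺})`. -/
def SatM {A S : Type} [Semigroup S] (α : FreeSemigroup A →ₙ* S) : Set (Set S) :=
  Sat { T | ∃ w : FreeSemigroup A, T = {α w} }

/-- Left quotient `w⁻¹L`. -/
def QuotL {A : Type} (w : FreeSemigroup A) (L : Set (FreeSemigroup A)) :
    Set (FreeSemigroup A) := { u | w * u ∈ L }

/-- Right quotient `Lw⁻¹`. -/
def QuotR {A : Type} (w : FreeSemigroup A) (L : Set (FreeSemigroup A)) :
    Set (FreeSemigroup A) := { u | u * w ∈ L }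

/-- A language is regular if it is recognized by a morphism into a finite
semigroup. -/
def Regular {A : Type} (L : Set (FreeSemigroup A)) : Prop :=
  ∃ (S : Type) (_ : Semigroup S) (_ : Fintype S)
    (β : FreeSemigroup A →ₙ* S) (F : Set S), L = ⇑β ⁻¹' F

/-- A class of languages that is nonempty, closed under Boolean operations and
under left/right quotients by words, and contains only regular languages. -/
def GoodClass {A : Type} (C : Set (Set (FreeSemigroup A))) : Prop :=
  C.Nonempty ∧
  (∀ L ∈ C, ∀ L' ∈ C, L ∪ L' ∈ C) ∧
  (∀ L ∈ C, ∀ L' ∈ C, L ∩ L' ∈ C) ∧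
  (∀ L ∈ C, Lᶜ ∈ C) ∧
  (∀ L ∈ C, ∀ w : FreeSemigroup A, QuotL w L ∈ C ∧ QuotR w L ∈ C) ∧
  (∀ L ∈ C, Regular L)

/-- A C-partition: a finite partition all of whose blocks belong to `C`. -/
def CPart {A : Type} (C : Set (Set (FreeSemigroup A)))
    (P : Set (Set (FreeSemigroup A))) : Prop :=
  FinPart P ∧ ∀ B ∈ P, B ∈ C

/-- The optimal imprint with respect to a class `C`: the intersection of the
imprints of all C-partitions. -/
def optImprint {A S : Type} [Semigroup S] (C : Set (Set (FreeSemigroup A)))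
    (α : FreeSemigroup A →ₙ* S) : Set (Set S) :=
  { T | ∀ P : Set (Set (FreeSemigroup A)), CPart C P → T ∈ imprint α P }

/-- A subset of a semigroup that is a subsemigroup and a group under the
induced product. -/
def IsGroupSet {M : Type} [Semigroup M] (G : Set M) : Prop :=
  (∀ x ∈ G, ∀ y ∈ G, x * y ∈ G) ∧
  ∃ e ∈ G, (∀ x ∈ G, e * x = x ∧ x * e = x) ∧
    ∀ x ∈ G, ∃ y ∈ G, x * y = e ∧ y * x = e

/-- Aperiodicity: `s^ω = s^(ω+1)` for every `s` (phrased via idempotent powers). -/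
def Aperiodic (S : Type) [Semigroup S] : Prop :=
  ∀ s : S, ∀ n : ℕ, spow s n * spow s n = spow s n → spow s n = spow s n * s

/-- Green's `H`-equivalence relative to a subsemigroup `X` of `M`
(with witnesses taken in `X`). -/
def HEquivIn {M : Type} [Semigroup M] (X : Set M) (s s' : M) : Prop :=
  s = s' ∨ ((∃ t ∈ X, s * t = s') ∧ (∃ t ∈ X, s' * t = s) ∧
            (∃ t ∈ X, t * s = s') ∧ (∃ t ∈ X, t * s' = s))

/-- `H` is an `H`-class of the semigroup `X`. -/
def IsHClassIn {M : Type} [Semigroup M] (X : Set M) (H : Set M) : Prop :=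
  ∃ s ∈ X, H = { s' ∈ X | HEquivIn X s s' }

/-- Closure conditions for `Sat_G`. -/
def SatGClosed {S : Type} [Semigroup S] (𝕊 X : Set (Set S)) : Prop :=
  𝕊 ⊆ X ∧
  (∀ T ∈ X, ∀ T' : Set S, T' ⊆ T → T' ∈ X) ∧
  (∀ T ∈ X, ∀ T' ∈ X, T * T' ∈ X) ∧
  (∀ 𝔾 : Set (Set S), 𝔾 ⊆ X → IsGroupSet 𝔾 → ⋃₀ 𝔾 ∈ X)

/-- `Sat_G 𝕊`: the smallest subset of `2^S` containing `𝕊` closed under downset,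
products, and unions of groups. -/
def SatG {S : Type} [Semigroup S] (𝕊 : Set (Set S)) : Set (Set S) :=
  ⋂₀ { X | SatGClosed 𝕊 X }

/-- Closure conditions for `Sat_H`. -/
def SatHClosed {S : Type} [Semigroup S] (𝕊 X : Set (Set S)) : Prop :=
  𝕊 ⊆ X ∧
  (∀ T ∈ X, ∀ T' : Set S, T' ⊆ T → T' ∈ X) ∧
  (∀ T ∈ X, ∀ T' ∈ X, T * T' ∈ X) ∧
  (∀ H : Set (Set S), IsHClassIn X H → ⋃₀ H ∈ X)

/-- `Sat_H 𝕊`: the smallest subset of `2^S` containing `𝕊` closed under downset,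
products, and unions of `H`-classes. -/
def SatH {S : Type} [Semigroup S] (𝕊 : Set (Set S)) : Set (Set S) :=
  ⋂₀ { X | SatHClosed 𝕊 X }

/-! ### Infinite words -/

/-- Satisfaction of a formula in an ω-word (a function `ℕ → A`), under an
assignment of variables to positions. -/
def InterpInf {A : Type} (w : ℕ → A) : Form A → (ℕ → ℕ) → Prop
  | .letter a i, v => w (v i) = a
  | .lt i j, v => v i < v j
  | .not φ, v => ¬ InterpInf w φ v
  | .and φ ψ, v => InterpInf w φ v ∧ InterpInf w ψ v
  | .ex n φ, v => ∃ p : ℕ, InterpInf w φ (Function.update v n p)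

/-- An ω-word satisfies a formula if every assignment satisfies it; for
sentences this is the usual notion of satisfaction. -/
def ModelsInf {A : Type} (w : ℕ → A) (φ : Form A) : Prop :=
  ∀ v : ℕ → ℕ, InterpInf w φ v

/-- The ω-language of ω-words satisfying `φ`. -/
def LangOfInf {A : Type} (φ : Form A) : Set (ℕ → A) := { w | ModelsInf w φ }

/-- An ω-language is FO-definable if it is the ω-language of some sentence. -/
def FODefinableInf {A : Type} (L : Set (ℕ → A)) : Prop :=
  ∃ φ : Form A, IsSentence φ ∧ L = LangOfInf φ

/-- `w ≡_k w'` for ω-words. -/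
def EquivKInf {A : Type} (k : ℕ) (w w' : ℕ → A) : Prop :=
  ∀ φ : Form A, IsSentence φ → φ.rank ≤ k → (ModelsInf w φ ↔ ModelsInf w' φ)

/-- An FO-partition of `A^∞`. -/
def FOPartInf {A : Type} (P : Set (Set (ℕ → A))) : Prop :=
  FinPart P ∧ ∀ B ∈ P, FODefinableInf B

/-- The imprint of a finite partition of `A^∞` on a map `α : A^∞ → Sinf`. -/
def imprintInf {A Sinf : Type} (α : (ℕ → A) → Sinf) (P : Set (Set (ℕ → A))) :
    Set (Set Sinf) :=
  { T | ∃ K ∈ P, T ⊆ α '' K }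

/-- A C-partition of `A^∞`. -/
def CPartInf {A : Type} (C : Set (Set (ℕ → A))) (P : Set (Set (ℕ → A))) : Prop :=
  FinPart P ∧ ∀ B ∈ P, B ∈ C

/-- The optimal imprint on `α : A^∞ → Sinf` with respect to a class `C` of
ω-languages. -/
def optImprintInf {A Sinf : Type} (C : Set (Set (ℕ → A))) (α : (ℕ → A) → Sinf) :
    Set (Set Sinf) :=
  { T | ∀ P : Set (Set (ℕ → A)), CPartInf C P → T ∈ imprintInf α P }

/-- The optimal FO-imprint on `α : A^∞ → Sinf`. -/
def optImprintFOInf {A Sinf : Type} (α : (ℕ → A) → Sinf) : Set (Set Sinf) :=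
  { T | ∀ P : Set (Set (ℕ → A)), FOPartInf P → T ∈ imprintInf α P }

/-- Concatenation of a finite word and an ω-word. -/
def catInf {A : Type} (u : FreeSemigroup A) (x : ℕ → A) : ℕ → A :=
  fun n =>
    if h : n < (wordList u).length then (wordList u).get ⟨n, h⟩
    else x (n - (wordList u).length)


section Stmt16Aux

variable {T : Type} [Semigroup T]

lemma spow_zero' (x : T) : spow x 0 = x := rfl

lemma spow_succ' (x : T) (n : ℕ) : spow x (n + 1) = spow x n * x := rfl

lemma spow_add' (x : T) (m n : ℕ) :
    spow x (m + n + 1) = spow x m * spow x n := by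
  induction n with
  | zero => rfl
  | succ n ih =>
    have h : m + (n + 1) + 1 = (m + n + 1) + 1 := by omega
    rw [h, spow_succ', ih, spow_succ', mul_assoc]

lemma spow_period' (x : T) (i q : ℕ) (h : spow x (i + q + 1) = spow x i) :
    ∀ r k, spow x (i + r + k * (q + 1)) = spow x (i + r) := by
  have step : ∀ r, spow x (i + r + (q + 1)) = spow x (i + r) := by
    intro r
    cases r with
    | zero =>
      have : i + 0 + (q + 1) = i + q + 1 := by omega
      rw [this, h]; simp
    | succ r =>
      have h1 : i + (r + 1) + (q + 1) = (i + q + 1) + r + 1 := by omega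
      have h2 : i + (r + 1) = i + r + 1 := by omega
      rw [h1, spow_add', h, h2, ← spow_add']
  intro r k
  induction k with
  | zero => simp
  | succ k ih =>
    have h1 : i + r + (k + 1) * (q + 1) = i + (r + k * (q + 1)) + (q + 1) := by ring
    have h2 : i + (r + k * (q + 1)) = i + r + k * (q + 1) := by omega
    rw [h1, step, h2, ih]

lemma exists_idem_spow [Fintype T] (x : T) :
    ∃ n : ℕ, spow x n * spow x n = spow x n := by
  have aux : ∀ i j : ℕ, i < j → spow x i = spow x j →
      ∃ n : ℕ, spow x n * spow x n = spow x n := by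
    intro i j hij heq
    set q := j - i - 1 with hq
    have hj : j = i + q + 1 := by omega
    have hper : spow x (i + q + 1) = spow x i := by rw [← hj, heq]
    set N := i + (i + 1) * q with hN
    refine ⟨N, ?_⟩
    have h1 : spow x (N + N + 1) = spow x N * spow x N := spow_add' x N N
    have h2 : N + N + 1 = i + ((i + 1) * q) + (i + 1) * (q + 1) := by
      rw [hN]; ring
    have h3 : spow x (N + N + 1) = spow x N := by
      rw [h2, spow_period' x i q hper ((i + 1) * q) (i + 1), hN]
    rw [← h1, h3]
  obtain ⟨i, j, hne, heq⟩ :=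
    Finite.exists_ne_map_eq_of_infinite (fun n : ℕ => spow x n)
  rcases hne.lt_or_gt with h | h
  · exact aux i j h heq
  · exact aux j i h heq.symm

end Stmt16Aux

theorem stmt16 {T : Type} [Semigroup T] [Fintype T] (H : Set T)
    (hH : ∃ s : T, H = { s' | HEquivIn (Set.univ : Set T) s s' }) :
    (∃ x : T, H = {x}) ∨
      ∃ (r : T) (G : Set T), IsGroupSet G ∧ H = (fun g => r * g) '' G := by
  classical
  obtain ⟨s, rfl⟩ := hH
  set H : Set T := { s' | HEquivIn (Set.univ : Set T) s s' } with hHdef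
  -- s belongs to H
  have hsH : s ∈ H := Or.inl rfl
  -- witnesses for non-trivial H-equivalence
  have hWit : ∀ x ∈ H, x ≠ s →
      (∃ a, s * a = x) ∧ (∃ a, x * a = s) ∧ (∃ b, b * s = x) ∧ (∃ b, b * x = s) := by
    intro x hx hxs
    rcases hx with h | ⟨⟨a, _, ha⟩, ⟨a', _, ha'⟩, ⟨b, _, hb⟩, ⟨b', _, hb'⟩⟩
    · exact absurd h.symm hxs
    · exact ⟨⟨a, ha⟩, ⟨a', ha'⟩, ⟨b, hb⟩, ⟨b', hb'⟩⟩
  -- key step: right multiplication by a "stabilizer" element keeps H stable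
  have hStep : ∀ x ∈ H, ∀ g : T, s * g ∈ H → x * g ∈ H := by
    intro x hx g hg
    by_cases hxs : x = s
    · rw [hxs]; exact hg
    · obtain ⟨⟨a, ha⟩, ⟨a', ha'⟩, ⟨b, hb⟩, ⟨b', hb'⟩⟩ := hWit x hx hxs
      by_cases hsg : s * g = s
      · have hxg : x * g = x := by
          rw [← hb, mul_assoc, hsg]
        rw [hxg]; exact hx
      · obtain ⟨⟨t1, ht1⟩, ⟨t2, ht2⟩, ⟨t3, ht3⟩, ⟨t4, ht4⟩⟩ := hWit (s * g) hg hsg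
        refine Or.inr ⟨⟨a * g, Set.mem_univ _, ?_⟩, ⟨t2 * a', Set.mem_univ _, ?_⟩,
          ⟨b * t3, Set.mem_univ _, ?_⟩, ⟨t4 * b', Set.mem_univ _, ?_⟩⟩
        · rw [← mul_assoc, ha]
        · have hxg : x * g = b * (s * g) := by rw [← hb, mul_assoc]
          calc (x * g) * (t2 * a') = (b * (s * g)) * (t2 * a') := by rw [hxg]
            _ = ((b * (s * g)) * t2) * a' := by rw [← mul_assoc]
            _ = (b * ((s * g) * t2)) * a' := by rw [mul_assoc b]
            _ = (b * s) * a' := by rw [ht2]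
            _ = x * a' := by rw [hb]
            _ = s := ha'
        · calc (b * t3) * s = b * (t3 * s) := mul_assoc _ _ _
            _ = b * (s * g) := by rw [ht3]
            _ = (b * s) * g := (mul_assoc _ _ _).symm
            _ = x * g := by rw [hb]
        · calc (t4 * b') * (x * g) = t4 * (b' * (x * g)) := mul_assoc _ _ _
            _ = t4 * ((b' * x) * g) := by rw [mul_assoc]
            _ = t4 * (s * g) := by rw [hb']
            _ = s := ht4
  -- the right stabilizer of H at s
  set K : Set T := { g : T | s * g ∈ H } with hKdef
  have hKmul : ∀ g ∈ K, ∀ g' ∈ K, g * g' ∈ K := by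
    intro g hg g' hg'
    show s * (g * g') ∈ H
    rw [← mul_assoc]
    exact hStep (s * g) hg g' hg'
  have hKspow : ∀ g ∈ K, ∀ n : ℕ, spow g n ∈ K := by
    intro g hg n
    induction n with
    | zero => exact hg
    | succ n ih => exact hKmul _ ih _ hg
  -- idempotents fix all of H pointwise (on the right)
  have hFix : ∀ f ∈ K, f * f = f → ∀ x ∈ H, x * f = x := by
    intro f hf hff
    have hsf : s * f ∈ H := hf
    obtain ⟨t2, ht2⟩ : ∃ t2, (s * f) * t2 = s := by
      by_cases h : s * f = s
      · exact ⟨f, by rw [mul_assoc, hff, h]⟩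
      · exact (hWit (s * f) hsf h).2.1
    have hu : ∀ x ∈ H, x * (f * t2) = x := by
      intro x hx
      by_cases hxs : x = s
      · rw [hxs, ← mul_assoc, ht2]
      · obtain ⟨_, _, ⟨b, hb⟩, _⟩ := hWit x hx hxs
        calc x * (f * t2) = (b * s) * (f * t2) := by rw [hb]
          _ = b * (s * (f * t2)) := mul_assoc _ _ _
          _ = b * ((s * f) * t2) := by rw [mul_assoc]
          _ = b * s := by rw [ht2]
          _ = x := hb
    have hinj : ∀ y ∈ H, ∀ y' ∈ H, y * f = y' * f → y = y' := by
      intro y hy y' hy' h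
      calc y = y * (f * t2) := (hu y hy).symm
        _ = (y * f) * t2 := (mul_assoc _ _ _).symm
        _ = (y' * f) * t2 := by rw [h]
        _ = y' * (f * t2) := mul_assoc _ _ _
        _ = y' := hu y' hy'
    intro x hx
    have hxf : x * f ∈ H := hStep x hx f hf
    refine hinj (x * f) hxf x hx ?_
    rw [mul_assoc, hff]
  -- either H = {s}, or we build the group
  by_cases hsing : ∀ x ∈ H, x = s
  · exact Or.inl ⟨s, Set.eq_singleton_iff_unique_mem.mpr ⟨hsH, hsing⟩⟩
  · push_neg at hsing
    obtain ⟨x0, hx0, hx0s⟩ := hsing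
    obtain ⟨⟨a0, ha0⟩, ⟨a0', ha0'⟩, _, _⟩ := hWit x0 hx0 hx0s
    -- an element c with s * c = s
    have hc : (a0 * a0' : T) ∈ K := by
      show s * (a0 * a0') ∈ H
      rw [← mul_assoc, ha0, ha0']
      exact hsH
    -- idempotents exist in K
    obtain ⟨n0, hn0⟩ := exists_idem_spow (a0 * a0')
    -- local H-classes
    set Gmk : T → Set T := fun f => { g : T | g ∈ K ∧ f * g = g ∧ g * f = g }
      with hGmk
    set Idem : Set T := { f : T | f ∈ K ∧ f * f = f } with hIdem
    have hIdemNe : (spow (a0 * a0') n0) ∈ Idem := ⟨hKspow _ hc n0, hn0⟩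
    -- pick an idempotent minimizing the cardinality of its local class
    set Scard : Set ℕ := (fun f => (Gmk f).ncard) '' Idem with hScard
    have hScardNe : Scard.Nonempty := ⟨_, ⟨_, hIdemNe, rfl⟩⟩
    obtain ⟨f, hfI, hfcard⟩ := Nat.sInf_mem hScardNe
    have hmin : ∀ d ∈ Idem, (Gmk f).ncard ≤ (Gmk d).ncard := by
      intro d hd
      exact (le_of_eq hfcard).trans (Nat.sInf_le ⟨d, hd, rfl⟩)
    obtain ⟨hfK, hff⟩ := hfI
    set G : Set T := Gmk f with hG
    have hfG : f ∈ G := ⟨hfK, hff, hff⟩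
    have hGmul : ∀ x ∈ G, ∀ y ∈ G, x * y ∈ G := by
      rintro x ⟨hxK, hfx, hxf⟩ y ⟨hyK, hfy, hyf⟩
      exact ⟨hKmul x hxK y hyK, by rw [← mul_assoc, hfx], by rw [mul_assoc, hyf]⟩
    have hGspow : ∀ x ∈ G, ∀ n : ℕ, spow x n ∈ G := by
      intro x hx n
      induction n with
      | zero => exact hx
      | succ n ih => exact hGmul _ ih _ hx
    -- every element of G has an inverse
    have hGinv : ∀ x ∈ G, ∃ y ∈ G, x * y = f ∧ y * x = f := by
      intro x hx
      obtain ⟨n, hn⟩ := exists_idem_spow x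
      have hdG : spow x n ∈ G := hGspow x hx n
      have hdI : spow x n ∈ Idem := ⟨hdG.1, hn⟩
      have hsub : Gmk (spow x n) ⊆ Gmk f := by
        rintro g ⟨hgK, hdg, hgd⟩
        refine ⟨hgK, ?_, ?_⟩
        · rw [← hdg, ← mul_assoc, hdG.2.1]
        · rw [← hgd, mul_assoc, hdG.2.2]
      have heq : Gmk (spow x n) = Gmk f :=
        Set.eq_of_subset_of_ncard_le hsub (hmin _ hdI)
      have hfmem : f ∈ Gmk (spow x n) := by rw [heq]; exact hfG
      -- the idempotent power of x equals f
      have hdf : spow x n = f := by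
        calc spow x n = f * spow x n := hdG.2.1.symm
          _ = f := hfmem.2.2
      refine ⟨spow x (2 * n), hGspow x hx _, ?_, ?_⟩
      · have h1 : x * spow x (2 * n) = spow x (2 * n + 1) := by
          have := spow_add' x 0 (2 * n)
          simpa [spow_zero'] using this.symm
        have h2 : spow x (2 * n + 1) = spow x n * spow x n := by
          have h3 : 2 * n + 1 = n + n + 1 := by omega
          rw [h3, spow_add']
        rw [h1, h2, hn, hdf]
      · have h1 : spow x (2 * n) * x = spow x (2 * n + 1) := (spow_succ' x _).symm
        have h2 : spow x (2 * n + 1) = spow x n * spow x n := by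
          have h3 : 2 * n + 1 = n + n + 1 := by omega
          rw [h3, spow_add']
        rw [h1, h2, hn, hdf]
    have hsf : s * f = s := hFix f hfK hff s hsH
    refine Or.inr ⟨s, G, ⟨hGmul, f, hfG, fun x hx => ⟨hx.2.1, hx.2.2⟩, hGinv⟩, ?_⟩
    ext x
    constructor
    · intro hx
      by_cases hxs : x = s
      · exact ⟨f, hfG, by simpa [hsf] using hxs.symm⟩
      · obtain ⟨⟨a, ha⟩, _, _, _⟩ := hWit x hx hxs
        have hxfix : x * f = x := hFix f hfK hff x hx
        have hval : s * (f * (a * f)) = x := by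
          calc s * (f * (a * f)) = (s * f) * (a * f) := (mul_assoc _ _ _).symm
            _ = s * (a * f) := by rw [hsf]
            _ = (s * a) * f := (mul_assoc _ _ _).symm
            _ = x * f := by rw [ha]
            _ = x := hxfix
        refine ⟨f * (a * f), ⟨?_, ?_, ?_⟩, hval⟩
        · show s * (f * (a * f)) ∈ H
          rw [hval]; exact hx
        · rw [← mul_assoc, hff]
        · calc (f * (a * f)) * f = f * ((a * f) * f) := mul_assoc _ _ _
            _ = f * (a * (f * f)) := by rw [mul_assoc a]
            _ = f * (a * f) := by rw [hff]
    · rintro ⟨g, hg, rfl⟩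
      exact hg.1

end FOSep
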